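/- Let a₀, a₁, a₂ : ℝ³ → ℝ be C^1 with a₀ and a₁ nowhere zero, satisfying ∂a₁/∂x = ∂a₀/∂y everywhere, and suppose there is a continuous function k : ℝ → ℝ of p alone with (∂a₂/∂y − ∂a₁/∂p)/a₁ = k(p) = (∂a₂/∂x − ∂a₀/∂p)/a₀ everywhere. Then μ(p) = exp(∫_{p₀}^p k(s)ds) is an integrating factor: μ(p)a₂, μ(p)a₁, μ(p)a₀ satisfy the three exactness symmetry conditions. -/

import Mathlib

noncomputable section

/-- Partial derivative w.r.t. the first variable. -/
def pd1 (f : ℝ → ℝ → ℝ → ℝ) (x y p : ℝ) : ℝ := deriv (fun t => f t y p) x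

/-- Partial derivative w.r.t. the second variable. -/
def pd2 (f : ℝ → ℝ → ℝ → ℝ) (x y p : ℝ) : ℝ := deriv (fun t => f x t p) y

/-- Partial derivative w.r.t. the third variable. -/
def pd3 (f : ℝ → ℝ → ℝ → ℝ) (x y p : ℝ) : ℝ := deriv (fun t => f x y t) p

/-- `f : ℝ³ → ℝ` (curried) is continuously differentiable. -/
def C1 (f : ℝ → ℝ → ℝ → ℝ) : Prop :=
  ContDiff ℝ 1 (fun q : ℝ × ℝ × ℝ => f q.1 q.2.1 q.2.2)

/-- The three exactness symmetry conditions for coefficients `a₂, a₁, a₀`. -/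
def ExactConds (a0 a1 a2 : ℝ → ℝ → ℝ → ℝ) : Prop :=
  (∀ x y p, pd2 a2 x y p = pd3 a1 x y p) ∧
  (∀ x y p, pd1 a2 x y p = pd3 a0 x y p) ∧
  (∀ x y p, pd1 a1 x y p = pd2 a0 x y p)

lemma diff1 {f : ℝ → ℝ → ℝ → ℝ} (hf : C1 f) (x y p : ℝ) :
    DifferentiableAt ℝ (fun t => f t y p) x := by
  have h := (hf.differentiable one_ne_zero).differentiableAt (x := (x, y, p))
  exact h.comp x (by fun_prop : DifferentiableAt ℝ (fun t : ℝ => ((t, y, p) : ℝ × ℝ × ℝ)) x)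

lemma diff2 {f : ℝ → ℝ → ℝ → ℝ} (hf : C1 f) (x y p : ℝ) :
    DifferentiableAt ℝ (fun t => f x t p) y := by
  have h := (hf.differentiable one_ne_zero).differentiableAt (x := (x, y, p))
  exact h.comp y (by fun_prop : DifferentiableAt ℝ (fun t : ℝ => ((x, t, p) : ℝ × ℝ × ℝ)) y)

lemma diff3 {f : ℝ → ℝ → ℝ → ℝ} (hf : C1 f) (x y p : ℝ) :
    DifferentiableAt ℝ (fun t => f x y t) p := by
  have h := (hf.differentiable one_ne_zero).differentiableAt (x := (x, y, p))
  exact h.comp (f := fun t : ℝ => ((x, y, t) : ℝ × ℝ × ℝ)) p (by fun_prop : DifferentiableAt ℝ (fun t : ℝ => ((x, y, t) : ℝ × ℝ × ℝ)) p)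

theorem integrating_factor_p_only
    (a0 a1 a2 : ℝ → ℝ → ℝ → ℝ)
    (ha0 : C1 a0) (ha1 : C1 a1) (ha2 : C1 a2)
    (ha0ne : ∀ x y p, a0 x y p ≠ 0) (ha1ne : ∀ x y p, a1 x y p ≠ 0)
    (hsym : ∀ x y p, pd1 a1 x y p = pd2 a0 x y p)
    (k : ℝ → ℝ) (hk : Continuous k)
    (hk1 : ∀ x y p, (pd2 a2 x y p - pd3 a1 x y p) / a1 x y p = k p)
    (hk2 : ∀ x y p, (pd1 a2 x y p - pd3 a0 x y p) / a0 x y p = k p)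
    (p0 : ℝ) :
    ExactConds
      (fun x y p => Real.exp (∫ s in p0..p, k s) * a0 x y p)
      (fun x y p => Real.exp (∫ s in p0..p, k s) * a1 x y p)
      (fun x y p => Real.exp (∫ s in p0..p, k s) * a2 x y p) := by
  set μ : ℝ → ℝ := fun p => Real.exp (∫ s in p0..p, k s) with hμdef
  have hμ : ∀ p, HasDerivAt μ (μ p * k p) p := by
    intro p
    have h1 : HasDerivAt (fun u => ∫ s in p0..u, k s) (k p) p :=
      intervalIntegral.integral_hasDerivAt_right (hk.intervalIntegrable p0 p)
        (hk.stronglyMeasurableAtFilter _ _) hk.continuousAt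
    simpa using h1.exp
  -- pd1 and pd2 of μ * a
  have hpd1 : ∀ (a : ℝ → ℝ → ℝ → ℝ), C1 a → ∀ x y p,
      pd1 (fun x y p => μ p * a x y p) x y p = μ p * pd1 a x y p := by
    intro a ha x y p
    simp only [pd1]
    exact deriv_const_mul (μ p) (diff1 ha x y p)
  have hpd2 : ∀ (a : ℝ → ℝ → ℝ → ℝ), C1 a → ∀ x y p,
      pd2 (fun x y p => μ p * a x y p) x y p = μ p * pd2 a x y p := by
    intro a ha x y p
    simp only [pd2]
    exact deriv_const_mul (μ p) (diff2 ha x y p)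
  have hpd3 : ∀ (a : ℝ → ℝ → ℝ → ℝ), C1 a → ∀ x y p,
      pd3 (fun x y p => μ p * a x y p) x y p
        = μ p * k p * a x y p + μ p * pd3 a x y p := by
    intro a ha x y p
    have h := (hμ p).mul ((diff3 ha x y p).hasDerivAt)
    simpa [pd3, Pi.mul_def] using h.deriv
  refine ⟨?_, ?_, ?_⟩
  · intro x y p
    have h1 : pd2 a2 x y p - pd3 a1 x y p = k p * a1 x y p :=
      (div_eq_iff (ha1ne x y p)).mp (hk1 x y p)
    rw [hpd2 a2 ha2, hpd3 a1 ha1]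
    linear_combination μ p * h1
  · intro x y p
    have h2 : pd1 a2 x y p - pd3 a0 x y p = k p * a0 x y p :=
      (div_eq_iff (ha0ne x y p)).mp (hk2 x y p)
    rw [hpd1 a2 ha2, hpd3 a0 ha0]
    linear_combination μ p * h2
  · intro x y p
    rw [hpd1 a1 ha1, hpd2 a0 ha0, hsym]
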